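/- arXiv:1901.00058 — 2 statements merged into one kernel-verified Lean document; each statement's English description precedes it below -/
import Mathlib

section
/- Let n ≥ 2 and let W : GL⁺(n) → ℝ be conformally invariant and bounded below. Then the quasiconvex envelope QW, defined by QW(F) := sup{w(F) : w : GL⁺(n) → ℝ quasiconvex with w(X) ≤ W(X) for all X ∈ GL⁺(n)}, is conformally invariant, i.e. QW(A F B) = QW(F) for all F ∈ GL⁺(n) and all A, B ∈ CSO(n). -/
open Matrix MeasureTheory Set

noncomputable section

/-- The space of real 2×2 matrices. -/
abbrev Mat2 := Matrix (Fin 2) (Fin 2) ℝ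

/-- Squared Frobenius norm of a 2×2 matrix. -/
def frobSq (F : Mat2) : ℝ := ∑ i, ∑ j, (F i j) ^ 2

/-- The special orthogonal group SO(2). -/
def SO2 (R : Mat2) : Prop := R.transpose * R = 1 ∧ R.det = 1

/-- The conformal special orthogonal group CSO(2) = (0,∞)·SO(2). -/
def CSO2 (A : Mat2) : Prop := ∃ a : ℝ, 0 < a ∧ ∃ R : Mat2, SO2 R ∧ A = a • R

/-- Conformal invariance of an energy `W : GL⁺(2) → ℝ`. -/
def ConfInv (W : Mat2 → ℝ) : Prop :=
  ∀ F : Mat2, 0 < F.det → ∀ A B : Mat2, CSO2 A → CSO2 B → W (A * F * B) = W F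

/-- `l1, l2` are the singular values of `F` (in either order): they are positive and their
product and sum of squares agree with `det F` and the squared Frobenius norm of `F`. -/
def SingVals (F : Mat2) (l1 l2 : ℝ) : Prop :=
  0 < l1 ∧ 0 < l2 ∧ l1 * l2 = F.det ∧ l1 ^ 2 + l2 ^ 2 = frobSq F

/-- `l1 ≥ l2` are the ordered singular values of `F`. -/
def OrdSingVals (F : Mat2) (l1 l2 : ℝ) : Prop := SingVals F l1 l2 ∧ l2 ≤ l1

/-- The larger singular value of a 2×2 matrix with positive determinant. -/
def sv1 (F : Mat2) : ℝ :=
  Real.sqrt ((frobSq F + Real.sqrt (frobSq F ^ 2 - 4 * F.det ^ 2)) / 2)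

/-- The smaller singular value of a 2×2 matrix with positive determinant. -/
def sv2 (F : Mat2) : ℝ :=
  Real.sqrt ((frobSq F - Real.sqrt (frobSq F ^ 2 - 4 * F.det ^ 2)) / 2)

/-- The distortion 𝕂(F) = ‖F‖²/(2 det F). -/
def Kdist (F : Mat2) : ℝ := frobSq F / (2 * F.det)

/-- Rank-one convexity of an energy on GL⁺(2). -/
def RankOneConvex (W : Mat2 → ℝ) : Prop :=
  ∀ F : Mat2, 0 < F.det → ∀ H : Mat2, H.rank = 1 → 0 < (F + H).det →
    ∀ t : ℝ, 0 ≤ t → t ≤ 1 → W (F + t • H) ≤ (1 - t) * W F + t * W (F + H)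

/-- The gradient (Jacobian matrix) of a map ϑ : ℝ² → ℝ². -/
def gradMat (ϑ : (Fin 2 → ℝ) → (Fin 2 → ℝ)) (x : Fin 2 → ℝ) : Mat2 :=
  Matrix.of fun i j => fderiv ℝ ϑ x (Pi.single j 1) i

/-- Quasiconvexity of an energy on GL⁺(2). -/
def Quasiconvex2 (W : Mat2 → ℝ) : Prop :=
  ∀ Ω : Set (Fin 2 → ℝ), IsOpen Ω → Bornology.IsBounded Ω →
    ∀ F₀ : Mat2, 0 < F₀.det →
    ∀ ϑ : (Fin 2 → ℝ) → (Fin 2 → ℝ), ContDiff ℝ (⊤ : ℕ∞) ϑ → HasCompactSupport ϑ →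
      tsupport ϑ ⊆ Ω → (∀ x ∈ Ω, 0 < (F₀ + gradMat ϑ x).det) →
      W F₀ * (volume Ω).toReal ≤ ∫ x in Ω, W (F₀ + gradMat ϑ x)

/-- Polyconvexity of an energy on GL⁺(2): `W(F) = P(F, det F)` for some convex
function `P : ℝ^{2×2} × ℝ → ℝ ∪ {+∞}`. -/
def Polyconvex (W : Mat2 → ℝ) : Prop :=
  ∃ P : Mat2 × ℝ → EReal,
    (∀ X Y : Mat2 × ℝ, ∀ t : ℝ, 0 ≤ t → t ≤ 1 →
      P (t • X + (1 - t) • Y) ≤ (t : ℝ) * P X + ((1 - t : ℝ) : EReal) * P Y) ∧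
    (∀ F : Mat2, 0 < F.det → (W F : EReal) = P (F, F.det))

/-- The rank-one convex envelope of `W` on GL⁺(2). -/
def RWenv (W : Mat2 → ℝ) (F : Mat2) : ℝ :=
  sSup {y | ∃ w : Mat2 → ℝ, RankOneConvex w ∧ (∀ X : Mat2, 0 < X.det → w X ≤ W X) ∧ y = w F}

/-- The quasiconvex envelope of `W` on GL⁺(2). -/
def QWenv (W : Mat2 → ℝ) (F : Mat2) : ℝ :=
  sSup {y | ∃ w : Mat2 → ℝ, Quasiconvex2 w ∧ (∀ X : Mat2, 0 < X.det → w X ≤ W X) ∧ y = w F}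

/-- The polyconvex envelope of `W` on GL⁺(2). -/
def PWenv (W : Mat2 → ℝ) (F : Mat2) : ℝ :=
  sSup {y | ∃ w : Mat2 → ℝ, Polyconvex w ∧ (∀ X : Mat2, 0 < X.det → w X ≤ W X) ∧ y = w F}

/-- The monotone-convex envelope of `h : [1,∞) → ℝ`. -/
def CmEnv (h : ℝ → ℝ) (t : ℝ) : ℝ :=
  sSup {y | ∃ p : ℝ → ℝ, ConvexOn ℝ (Set.Ici (1 : ℝ)) p ∧ MonotoneOn p (Set.Ici (1 : ℝ)) ∧
    (∀ s : ℝ, 1 ≤ s → p s ≤ h s) ∧ y = p t}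

/-- The convex envelope of `h : [1,∞) → ℝ`. -/
def CEnv (h : ℝ → ℝ) (t : ℝ) : ℝ :=
  sSup {y | ∃ p : ℝ → ℝ, ConvexOn ℝ (Set.Ici (1 : ℝ)) p ∧
    (∀ s : ℝ, 1 ≤ s → p s ≤ h s) ∧ y = p t}

/-- The special orthogonal group SO(n). -/
def SOnN {n : ℕ} (R : Matrix (Fin n) (Fin n) ℝ) : Prop := R.transpose * R = 1 ∧ R.det = 1

/-- The conformal special orthogonal group CSO(n) = (0,∞)·SO(n). -/
def CSOnN {n : ℕ} (A : Matrix (Fin n) (Fin n) ℝ) : Prop :=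
  ∃ a : ℝ, 0 < a ∧ ∃ R : Matrix (Fin n) (Fin n) ℝ, SOnN R ∧ A = a • R

/-- Conformal invariance of an energy `W : GL⁺(n) → ℝ`. -/
def ConfInvN {n : ℕ} (W : Matrix (Fin n) (Fin n) ℝ → ℝ) : Prop :=
  ∀ F : Matrix (Fin n) (Fin n) ℝ, 0 < F.det →
    ∀ A B : Matrix (Fin n) (Fin n) ℝ, CSOnN A → CSOnN B → W (A * F * B) = W F

/-- Rank-one convexity of an energy on GL⁺(n). -/
def RankOneConvexN {n : ℕ} (W : Matrix (Fin n) (Fin n) ℝ → ℝ) : Prop :=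
  ∀ F : Matrix (Fin n) (Fin n) ℝ, 0 < F.det →
    ∀ H : Matrix (Fin n) (Fin n) ℝ, H.rank = 1 → 0 < (F + H).det →
    ∀ t : ℝ, 0 ≤ t → t ≤ 1 → W (F + t • H) ≤ (1 - t) * W F + t * W (F + H)

/-- The gradient (Jacobian matrix) of a map ϑ : ℝⁿ → ℝⁿ. -/
def gradMatN {n : ℕ} (ϑ : (Fin n → ℝ) → (Fin n → ℝ)) (x : Fin n → ℝ) :
    Matrix (Fin n) (Fin n) ℝ :=
  Matrix.of fun i j => fderiv ℝ ϑ x (Pi.single j 1) i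

/-- Quasiconvexity of an energy on GL⁺(n). -/
def QuasiconvexN {n : ℕ} (W : Matrix (Fin n) (Fin n) ℝ → ℝ) : Prop :=
  ∀ Ω : Set (Fin n → ℝ), IsOpen Ω → Bornology.IsBounded Ω →
    ∀ F₀ : Matrix (Fin n) (Fin n) ℝ, 0 < F₀.det →
    ∀ ϑ : (Fin n → ℝ) → (Fin n → ℝ), ContDiff ℝ (⊤ : ℕ∞) ϑ → HasCompactSupport ϑ →
      tsupport ϑ ⊆ Ω → (∀ x ∈ Ω, 0 < (F₀ + gradMatN ϑ x).det) →
      W F₀ * (volume Ω).toReal ≤ ∫ x in Ω, W (F₀ + gradMatN ϑ x)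

/-- The rank-one convex envelope of `W` on GL⁺(n). -/
def RWenvN {n : ℕ} (W : Matrix (Fin n) (Fin n) ℝ → ℝ) (F : Matrix (Fin n) (Fin n) ℝ) : ℝ :=
  sSup {y | ∃ w : Matrix (Fin n) (Fin n) ℝ → ℝ, RankOneConvexN w ∧
    (∀ X : Matrix (Fin n) (Fin n) ℝ, 0 < X.det → w X ≤ W X) ∧ y = w F}

/-- The quasiconvex envelope of `W` on GL⁺(n). -/
def QWenvN {n : ℕ} (W : Matrix (Fin n) (Fin n) ℝ → ℝ) (F : Matrix (Fin n) (Fin n) ℝ) : ℝ :=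
  sSup {y | ∃ w : Matrix (Fin n) (Fin n) ℝ → ℝ, QuasiconvexN w ∧
    (∀ X : Matrix (Fin n) (Fin n) ℝ, 0 < X.det → w X ≤ W X) ∧ y = w F}

end
section Aux

open Matrix MeasureTheory Set

lemma cso_det_pos {n : ℕ} {A : Matrix (Fin n) (Fin n) ℝ} (hA : CSOnN A) : 0 < A.det := by
  obtain ⟨a, ha, R, hR, rfl⟩ := hA
  rw [Matrix.det_smul, hR.2, mul_one]
  positivity

lemma cso_inv {n : ℕ} {A : Matrix (Fin n) (Fin n) ℝ} (hA : CSOnN A) :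
    ∃ A' : Matrix (Fin n) (Fin n) ℝ, CSOnN A' ∧ A' * A = 1 ∧ A * A' = 1 := by
  obtain ⟨a, ha, R, hR, rfl⟩ := hA
  refine ⟨a⁻¹ • R.transpose, ⟨a⁻¹, inv_pos.mpr ha, R.transpose, ⟨?_, ?_⟩, rfl⟩, ?_, ?_⟩
  · rw [Matrix.transpose_transpose]
    exact mul_eq_one_comm.mp hR.1
  · rw [Matrix.det_transpose]; exact hR.2
  · rw [Matrix.smul_mul, Matrix.mul_smul, smul_smul, inv_mul_cancel₀ ha.ne', hR.1, one_smul]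
  · rw [Matrix.smul_mul, Matrix.mul_smul, smul_smul, mul_inv_cancel₀ ha.ne',
      mul_eq_one_comm.mp hR.1, one_smul]

lemma quasiconvexN_mul {n : ℕ} {w : Matrix (Fin n) (Fin n) ℝ → ℝ}
    (hw : QuasiconvexN w) {A B : Matrix (Fin n) (Fin n) ℝ}
    (hA : 0 < A.det) (hB : 0 < B.det) :
    QuasiconvexN (fun X => w (A * X * B)) := by
  classical
  intro Ω hΩo hΩb F₀ hF₀ ϑ hϑ hϑc hϑs hϑpos
  have hBu : IsUnit B.det := isUnit_iff_ne_zero.mpr hB.ne'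
  have hBinv : Invertible B := B.invertibleOfIsUnitDet hBu
  set LcA : (Fin n → ℝ) →L[ℝ] (Fin n → ℝ) :=
    LinearMap.toContinuousLinearMap (Matrix.toLin' A) with hLcA
  set LcB : (Fin n → ℝ) →L[ℝ] (Fin n → ℝ) :=
    LinearMap.toContinuousLinearMap (Matrix.toLin' B) with hLcB
  set LcB' : (Fin n → ℝ) →L[ℝ] (Fin n → ℝ) :=
    LinearMap.toContinuousLinearMap (Matrix.toLin' (⅟B)) with hLcB'
  have hBB' : ∀ x, LcB (LcB' x) = x := by
    intro x
    simp only [hLcB, hLcB', LinearMap.coe_toContinuousLinearMap', Matrix.toLin'_apply,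
      Matrix.mulVec_mulVec, mul_invOf_self, Matrix.one_mulVec]
  have hB'B : ∀ x, LcB' (LcB x) = x := by
    intro x
    simp only [hLcB, hLcB', LinearMap.coe_toContinuousLinearMap', Matrix.toLin'_apply,
      Matrix.mulVec_mulVec, invOf_mul_self, Matrix.one_mulVec]
  have hinj : Function.Injective (⇑LcB) := Function.LeftInverse.injective hB'B
  have hsurj : Function.Surjective (⇑LcB) := Function.RightInverse.surjective hBB'
  set Ω' : Set (Fin n → ℝ) := ⇑LcB ⁻¹' Ω with hΩ'
  have hΩ'o : IsOpen Ω' := hΩo.preimage LcB.continuous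
  have hΩ'img : Ω' = ⇑LcB' '' Ω := by
    ext y
    constructor
    · intro hy; exact ⟨LcB y, hy, hB'B y⟩
    · rintro ⟨x, hx, rfl⟩
      show LcB (LcB' x) ∈ Ω
      rw [hBB']; exact hx
  have hΩ'b : Bornology.IsBounded Ω' := by
    rw [hΩ'img]; exact (LcB'.lipschitz.isBounded_image hΩb)
  set ψ : (Fin n → ℝ) → (Fin n → ℝ) := fun y => LcA (ϑ (LcB y)) with hψ
  have hψsm : ContDiff ℝ (⊤ : ℕ∞) ψ := LcA.contDiff.comp (hϑ.comp LcB.contDiff)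
  have hsupp : tsupport ψ ⊆ ⇑LcB ⁻¹' (tsupport ϑ) := by
    apply closure_minimal
    · intro y hy
      have : ϑ (LcB y) ≠ 0 := by
        intro h0
        apply hy
        simp [hψ, h0]
      exact subset_closure this
    · exact (isClosed_tsupport ϑ).preimage LcB.continuous
  have hψc : HasCompactSupport ψ := by
    have hpre : ⇑LcB ⁻¹' (tsupport ϑ) = ⇑LcB' '' (tsupport ϑ) := by
      ext y
      constructor
      · intro hy; exact ⟨LcB y, hy, hB'B y⟩
      · rintro ⟨x, hx, rfl⟩
        show LcB (LcB' x) ∈ tsupport ϑ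
        rw [hBB']; exact hx
    have hcomp : IsCompact (⇑LcB' '' (tsupport ϑ)) := hϑc.image LcB'.continuous
    exact IsCompact.of_isClosed_subset (by rwa [← hpre] at hcomp) (isClosed_tsupport ψ)
      hsupp
  have hψs : tsupport ψ ⊆ Ω' := hsupp.trans (Set.preimage_mono hϑs)
  have hϑd : Differentiable ℝ ϑ := hϑ.differentiable (by simp)
  have hder : ∀ y, HasFDerivAt ψ (LcA.comp ((fderiv ℝ ϑ (LcB y)).comp LcB)) y := by
    intro y
    have h1 : HasFDerivAt (fun y => ϑ (LcB y)) ((fderiv ℝ ϑ (LcB y)).comp LcB) y :=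
      ((hϑd (LcB y)).hasFDerivAt).comp y LcB.hasFDerivAt
    exact LcA.hasFDerivAt.comp y h1
  have hsingle : ∀ v : Fin n → ℝ, v = ∑ l, v l • (Pi.single l (1:ℝ) : Fin n → ℝ) := by
    intro v; funext m
    simp [Finset.sum_apply, Pi.single_apply]
  have hgrad : ∀ y, gradMatN ψ y = A * gradMatN ϑ (LcB y) * B := by
    intro y
    ext i j
    have hf := (hder y).fderiv
    show fderiv ℝ ψ y (Pi.single j 1) i = (A * gradMatN ϑ (LcB y) * B) i j
    rw [hf]
    simp only [ContinuousLinearMap.coe_comp', Function.comp_apply]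
    have hvB : LcB (Pi.single j 1) = fun l => B l j := by
      simp [hLcB, Matrix.toLin'_apply]; rfl
    rw [hvB]
    have hD : fderiv ℝ ϑ (LcB y) (fun l => B l j)
        = ∑ l, B l j • fderiv ℝ ϑ (LcB y) (Pi.single l (1:ℝ)) := by
      conv_lhs => rw [hsingle (fun l => B l j)]
      rw [map_sum]
      apply Finset.sum_congr rfl
      intro l _
      exact (fderiv ℝ ϑ (LcB y)).map_smul _ _
    rw [hD]
    have hAapp : ∀ u : Fin n → ℝ, LcA u = A.mulVec u := by
      intro u; simp [hLcA, Matrix.toLin'_apply]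
    rw [hAapp]
    rw [Matrix.mul_assoc, Matrix.mul_apply]
    simp only [Matrix.mulVec, dotProduct]
    apply Finset.sum_congr rfl
    intro k _
    rw [Matrix.mul_apply]
    simp only [Finset.sum_apply, Pi.smul_apply, smul_eq_mul, Finset.mul_sum]
    apply Finset.sum_congr rfl
    intro l _
    have hGkl : gradMatN ϑ (LcB y) k l = fderiv ℝ ϑ (LcB y) (Pi.single l 1) k := rfl
    rw [hGkl]; ring
  have hdetAFB : 0 < (A * F₀ * B).det := by
    rw [Matrix.det_mul, Matrix.det_mul]; positivity
  have hdecomp : ∀ y, A * F₀ * B + gradMatN ψ y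
      = A * (F₀ + gradMatN ϑ (LcB y)) * B := by
    intro y
    rw [hgrad y, Matrix.mul_add, Matrix.add_mul]
  have hpos : ∀ y ∈ Ω', 0 < (A * F₀ * B + gradMatN ψ y).det := by
    intro y hy
    rw [hdecomp y, Matrix.det_mul, Matrix.det_mul]
    have := hϑpos (LcB y) hy
    positivity
  have hmain := hw Ω' hΩ'o hΩ'b (A * F₀ * B) hdetAFB ψ hψsm hψc hψs hpos
  set g : (Fin n → ℝ) → ℝ := fun x => w (A * (F₀ + gradMatN ϑ x) * B) with hg
  have hLcBdet : LcB.det = B.det := by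
    rw [hLcB]
    show LinearMap.det _ = B.det
    rw [LinearMap.coe_toContinuousLinearMap, LinearMap.det_toLin']
  have himg : ⇑LcB '' Ω' = Ω := Set.image_preimage_eq Ω hsurj
  have hcov := MeasureTheory.integral_image_eq_integral_abs_det_fderiv_smul
    (μ := volume) hΩ'o.measurableSet
    (fun x _ => LcB.hasFDerivAt.hasFDerivWithinAt) (hinj.injOn) g
  rw [himg] at hcov
  have habs : |LcB.det| = B.det := by rw [hLcBdet, abs_of_pos hB]
  have hcov2 : ∫ x in Ω, g x = B.det * ∫ y in Ω', g (LcB y) := by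
    rw [hcov]
    simp_rw [habs, smul_eq_mul]
    rw [MeasureTheory.integral_const_mul]
  have hvol : volume Ω' = ENNReal.ofReal (B.det)⁻¹ * volume Ω := by
    have h1 : LinearMap.det (Matrix.toLin' B) ≠ 0 := by
      rw [LinearMap.det_toLin']; exact hB.ne'
    have h2 := MeasureTheory.Measure.addHaar_preimage_linearMap
      (μ := volume) h1 Ω
    have h3 : ⇑LcB ⁻¹' Ω = ⇑(Matrix.toLin' B) ⁻¹' Ω := by
      rw [hLcB, LinearMap.coe_toContinuousLinearMap']
    rw [hΩ', h3, h2, LinearMap.det_toLin', abs_of_nonneg (by positivity)]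
  have hvolR : (volume Ω').toReal = (B.det)⁻¹ * (volume Ω).toReal := by
    rw [hvol, ENNReal.toReal_mul, ENNReal.toReal_ofReal (by positivity)]
  have hintg : (∫ y in Ω', w (A * F₀ * B + gradMatN ψ y)) = ∫ y in Ω', g (LcB y) := by
    apply MeasureTheory.integral_congr_ae
    filter_upwards with y
    rw [hdecomp y]
  rw [hintg, hvolR] at hmain
  show w (A * F₀ * B) * (volume Ω).toReal ≤ ∫ x in Ω, g x
  rw [hcov2]
  have hBne : B.det ≠ 0 := hB.ne'
  calc w (A * F₀ * B) * (volume Ω).toReal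
      = B.det * (w (A * F₀ * B) * ((B.det)⁻¹ * (volume Ω).toReal)) := by
        field_simp
    _ ≤ B.det * ∫ y in Ω', g (LcB y) :=
        mul_le_mul_of_nonneg_left hmain hB.le

end Aux


/-- The quasiconvex envelope of a conformally invariant energy on
GL⁺(n), `n ≥ 2`, bounded below, is conformally invariant. -/
theorem quasiconvex_envelope_conformally_invariant (n : ℕ) (hn : 2 ≤ n)
    (W : Matrix (Fin n) (Fin n) ℝ → ℝ) (hW : ConfInvN W)
    (hbd : ∃ C : ℝ, ∀ F : Matrix (Fin n) (Fin n) ℝ, 0 < F.det → C ≤ W F) :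
    ConfInvN (QWenvN W) := by
  
  intro F hF A B hA hB
  obtain ⟨A', hA', hA'A, hAA'⟩ := cso_inv hA
  obtain ⟨B', hB', hB'B, hBB'⟩ := cso_inv hB
  have hAd := cso_det_pos hA
  have hBd := cso_det_pos hB
  have hA'd := cso_det_pos hA'
  have hB'd := cso_det_pos hB'
  unfold QWenvN
  congr 1
  ext y
  constructor
  · rintro ⟨w, hwq, hwle, rfl⟩
    refine ⟨fun X => w (A * X * B), quasiconvexN_mul hwq hAd hBd, fun X hX => ?_, rfl⟩
    have hdet : 0 < (A * X * B).det := by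
      rw [Matrix.det_mul, Matrix.det_mul]; positivity
    calc w (A * X * B) ≤ W (A * X * B) := hwle _ hdet
      _ = W X := hW X hX A B hA hB
  · rintro ⟨w, hwq, hwle, rfl⟩
    refine ⟨fun X => w (A' * X * B'), quasiconvexN_mul hwq hA'd hB'd, fun X hX => ?_, ?_⟩
    · have hdet : 0 < (A' * X * B').det := by
        rw [Matrix.det_mul, Matrix.det_mul]; positivity
      calc w (A' * X * B') ≤ W (A' * X * B') := hwle _ hdet
        _ = W X := hW X hX A' B' hA' hB'
    · show w F = w (A' * (A * F * B) * B')
      congr 1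
      calc F = (A' * A) * F * (B * B') := by rw [hA'A, hBB', Matrix.one_mul, Matrix.mul_one]
        _ = A' * (A * F * B) * B' := by noncomm_ring
end

section
/- Let W : GL⁺(2) → ℝ be the linear distortion, W(F) := K(F) = λ₁/λ₂, where λ₁ ≥ λ₂ are the ordered singular values of F. Then: (a) W is polyconvex; (b) W(F) = Ψ(𝕂(F)) for all F ∈ GL⁺(2), where Ψ : [1,∞) → ℝ, Ψ(x) := x + √(x² − 1); and (c) Ψ is not convex on [1,∞). In particular, a conformally invariant energy W(F) = Ψ(𝕂(F)) can be polyconvex without Ψ being convex, disproving Adamowicz's conjecture in dimension two. -/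
open Matrix MeasureTheory Set

noncomputable section AuxProof

/-- `√(u²+v²)`, the Euclidean norm of `(u,v)`. -/
def nrm2 (u v : ℝ) : ℝ := Real.sqrt (u ^ 2 + v ^ 2)

lemma nrm2_nonneg (u v : ℝ) : 0 ≤ nrm2 u v := Real.sqrt_nonneg _

lemma nrm2_cs (a b c d : ℝ) : a * c + b * d ≤ nrm2 a b * nrm2 c d := by
  have h1 : (nrm2 a b) ^ 2 = a ^ 2 + b ^ 2 := Real.sq_sqrt (by positivity)
  have h2 : (nrm2 c d) ^ 2 = c ^ 2 + d ^ 2 := Real.sq_sqrt (by positivity)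
  have hn : 0 ≤ nrm2 a b * nrm2 c d := mul_nonneg (nrm2_nonneg _ _) (nrm2_nonneg _ _)
  rcases le_or_gt (a * c + b * d) 0 with h | h
  · exact h.trans hn
  · have hsq : (a * c + b * d) ^ 2 ≤ (nrm2 a b * nrm2 c d) ^ 2 := by
      rw [mul_pow, h1, h2]; nlinarith [sq_nonneg (a * d - b * c)]
    exact le_of_pow_le_pow_left₀ two_ne_zero hn hsq

lemma nrm2_add (a b c d : ℝ) : nrm2 (a + c) (b + d) ≤ nrm2 a b + nrm2 c d := by
  have h1 : (nrm2 a b) ^ 2 = a ^ 2 + b ^ 2 := Real.sq_sqrt (by positivity)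
  have h2 : (nrm2 c d) ^ 2 = c ^ 2 + d ^ 2 := Real.sq_sqrt (by positivity)
  have hcs := nrm2_cs a b c d
  have hle : (a + c) ^ 2 + (b + d) ^ 2 ≤ (nrm2 a b + nrm2 c d) ^ 2 := by nlinarith
  calc nrm2 (a + c) (b + d) ≤ Real.sqrt ((nrm2 a b + nrm2 c d) ^ 2) :=
        Real.sqrt_le_sqrt hle
    _ = nrm2 a b + nrm2 c d :=
        Real.sqrt_sq (add_nonneg (nrm2_nonneg _ _) (nrm2_nonneg _ _))

lemma nrm2_smul (t u v : ℝ) (ht : 0 ≤ t) : nrm2 (t * u) (t * v) = t * nrm2 u v := by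
  unfold nrm2
  rw [show (t * u) ^ 2 + (t * v) ^ 2 = t ^ 2 * (u ^ 2 + v ^ 2) by ring,
    Real.sqrt_mul (sq_nonneg t), Real.sqrt_sq ht]

/-- The convex function `N(F) = √((a+d)²+(b−c)²) + √((a−d)²+(b+c)²) = λ₁ + λ₂`. -/
def Nfun (F : Mat2) : ℝ :=
  nrm2 (F 0 0 + F 1 1) (F 0 1 - F 1 0) + nrm2 (F 0 0 - F 1 1) (F 0 1 + F 1 0)

lemma Nfun_nonneg (F : Mat2) : 0 ≤ Nfun F :=
  add_nonneg (nrm2_nonneg _ _) (nrm2_nonneg _ _)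

lemma Nfun_convex (X Y : Mat2) (t s : ℝ) (ht : 0 ≤ t) (hs : 0 ≤ s) :
    Nfun (t • X + s • Y) ≤ t * Nfun X + s * Nfun Y := by
  have hE : ∀ i j, (t • X + s • Y) i j = t * X i j + s * Y i j := by
    intro i j
    simp [Matrix.add_apply, Matrix.smul_apply, smul_eq_mul]
  unfold Nfun
  rw [hE, hE, hE, hE]
  have h1 : nrm2 ((t * X 0 0 + s * Y 0 0) + (t * X 1 1 + s * Y 1 1))
      ((t * X 0 1 + s * Y 0 1) - (t * X 1 0 + s * Y 1 0))
      ≤ t * nrm2 (X 0 0 + X 1 1) (X 0 1 - X 1 0) + s * nrm2 (Y 0 0 + Y 1 1) (Y 0 1 - Y 1 0) := by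
    have key := nrm2_add (t * (X 0 0 + X 1 1)) (t * (X 0 1 - X 1 0))
      (s * (Y 0 0 + Y 1 1)) (s * (Y 0 1 - Y 1 0))
    rw [nrm2_smul _ _ _ ht, nrm2_smul _ _ _ hs] at key
    have e : nrm2 ((t * X 0 0 + s * Y 0 0) + (t * X 1 1 + s * Y 1 1))
        ((t * X 0 1 + s * Y 0 1) - (t * X 1 0 + s * Y 1 0))
        = nrm2 (t * (X 0 0 + X 1 1) + s * (Y 0 0 + Y 1 1))
          (t * (X 0 1 - X 1 0) + s * (Y 0 1 - Y 1 0)) := by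
      unfold nrm2; congr 1; ring
    rw [e]; exact key
  have h2 : nrm2 ((t * X 0 0 + s * Y 0 0) - (t * X 1 1 + s * Y 1 1))
      ((t * X 0 1 + s * Y 0 1) + (t * X 1 0 + s * Y 1 0))
      ≤ t * nrm2 (X 0 0 - X 1 1) (X 0 1 + X 1 0) + s * nrm2 (Y 0 0 - Y 1 1) (Y 0 1 + Y 1 0) := by
    have key := nrm2_add (t * (X 0 0 - X 1 1)) (t * (X 0 1 + X 1 0))
      (s * (Y 0 0 - Y 1 1)) (s * (Y 0 1 + Y 1 0))
    rw [nrm2_smul _ _ _ ht, nrm2_smul _ _ _ hs] at key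
    have e : nrm2 ((t * X 0 0 + s * Y 0 0) - (t * X 1 1 + s * Y 1 1))
        ((t * X 0 1 + s * Y 0 1) + (t * X 1 0 + s * Y 1 0))
        = nrm2 (t * (X 0 0 - X 1 1) + s * (Y 0 0 - Y 1 1))
          (t * (X 0 1 + X 1 0) + s * (Y 0 1 + Y 1 0)) := by
      unfold nrm2; congr 1; ring
    rw [e]; exact key
  linarith

lemma perspective_ineq (a b d1 d2 t s : ℝ) (hd1 : 0 < d1) (hd2 : 0 < d2)
    (ht : 0 ≤ t) (hs : 0 ≤ s) (hts : t + s = 1) :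
    (t * a + s * b) ^ 2 / (4 * (t * d1 + s * d2))
      ≤ t * (a ^ 2 / (4 * d1)) + s * (b ^ 2 / (4 * d2)) := by
  have hD : 0 < t * d1 + s * d2 := by
    rcases lt_or_eq_of_le ht with h | h
    · nlinarith [mul_pos h hd1, mul_nonneg hs hd2.le]
    · have hs1 : s = 1 := by linarith
      rw [← h, hs1]; simpa using hd2
  rw [div_le_iff₀ (by positivity)]
  have hrw : t * (a ^ 2 / (4 * d1)) + s * (b ^ 2 / (4 * d2))
      = (t * a ^ 2 * d2 + s * b ^ 2 * d1) / (4 * (d1 * d2)) := by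
    field_simp
  rw [hrw, div_mul_eq_mul_div, le_div_iff₀ (by positivity)]
  nlinarith [mul_nonneg (mul_nonneg ht hs) (sq_nonneg (a * d2 - b * d1))]

lemma frobSq_eq (F : Mat2) :
    frobSq F = F 0 0 ^ 2 + F 0 1 ^ 2 + F 1 0 ^ 2 + F 1 1 ^ 2 := by
  simp [frobSq, Fin.sum_univ_two]; ring

lemma det_eq (F : Mat2) : F.det = F 0 0 * F 1 1 - F 0 1 * F 1 0 :=
  Matrix.det_fin_two F

lemma frobSq_ge (F : Mat2) : 2 * F.det ≤ frobSq F := by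
  rw [frobSq_eq, det_eq]
  nlinarith [sq_nonneg (F 0 0 - F 1 1), sq_nonneg (F 0 1 + F 1 0)]

lemma frobSq_ge' (F : Mat2) : -(2 * F.det) ≤ frobSq F := by
  rw [frobSq_eq, det_eq]
  nlinarith [sq_nonneg (F 0 0 + F 1 1), sq_nonneg (F 0 1 - F 1 0)]

/-- The master identity: for `det F > 0`,
`sv1 F / sv2 F = (f + √(f² − 4D²)) / (2D)`. -/
lemma sv_ratio (F : Mat2) (hF : 0 < F.det) :
    sv1 F / sv2 F
      = (frobSq F + Real.sqrt (frobSq F ^ 2 - 4 * F.det ^ 2)) / (2 * F.det) := by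
  set f := frobSq F with hf_def
  set D := F.det with hD_def
  have h2D : 2 * D ≤ f := frobSq_ge F
  have hf : 0 < f := lt_of_lt_of_le (by linarith) h2D
  have hdisc : 0 ≤ f ^ 2 - 4 * D ^ 2 := by nlinarith
  set g := Real.sqrt (f ^ 2 - 4 * D ^ 2) with hg_def
  have hg0 : 0 ≤ g := Real.sqrt_nonneg _
  have hg2 : g ^ 2 = f ^ 2 - 4 * D ^ 2 := Real.sq_sqrt hdisc
  have hglt : g < f := by
    have : g < Real.sqrt (f ^ 2) := Real.sqrt_lt_sqrt hdisc (by nlinarith)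
    rwa [Real.sqrt_sq hf.le] at this
  have hnum : 0 < (f + g) / 2 := by linarith
  have hden : 0 < (f - g) / 2 := by linarith
  have key : sv1 F / sv2 F = Real.sqrt (((f + g) / 2) / ((f - g) / 2)) := by
    rw [sv1, sv2, ← Real.sqrt_div hnum.le]
  rw [key]
  have hfg : (f + g) * (f - g) = 4 * D ^ 2 := by nlinarith
  have h2D0 : (0:ℝ) < (2 * D) ^ 2 := by nlinarith
  have hratio : ((f + g) / 2) / ((f - g) / 2) = ((f + g) / (2 * D)) ^ 2 := by
    rw [div_pow, div_eq_div_iff hden.ne' h2D0.ne']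
    linear_combination (-(f + g) / 2) * hfg
  have hfg0 : 0 ≤ (f + g) / (2 * D) := by positivity
  rw [hratio, Real.sqrt_sq hfg0]

lemma Nfun_sq (F : Mat2) (hF : 0 < F.det) :
    (Nfun F) ^ 2 = 2 * frobSq F + 2 * Real.sqrt (frobSq F ^ 2 - 4 * F.det ^ 2) := by
  set f := frobSq F with hf_def
  set D := F.det with hD_def
  have e1 : (F 0 0 + F 1 1) ^ 2 + (F 0 1 - F 1 0) ^ 2 = f + 2 * D := by
    rw [hf_def, hD_def, frobSq_eq, det_eq]; ring
  have e2 : (F 0 0 - F 1 1) ^ 2 + (F 0 1 + F 1 0) ^ 2 = f - 2 * D := by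
    rw [hf_def, hD_def, frobSq_eq, det_eq]; ring
  have h1 : 0 ≤ f + 2 * D := by rw [← e1]; positivity
  have h2 : 0 ≤ f - 2 * D := by rw [← e2]; positivity
  have hmul : (f + 2 * D) * (f - 2 * D) = f ^ 2 - 4 * D ^ 2 := by ring
  unfold Nfun nrm2
  rw [e1, e2]
  have s1 : Real.sqrt (f + 2 * D) ^ 2 = f + 2 * D := Real.sq_sqrt h1
  have s2 : Real.sqrt (f - 2 * D) ^ 2 = f - 2 * D := Real.sq_sqrt h2
  have s3 : Real.sqrt (f + 2 * D) * Real.sqrt (f - 2 * D)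
      = Real.sqrt (f ^ 2 - 4 * D ^ 2) := by
    rw [← Real.sqrt_mul h1, hmul]
  nlinarith [s1, s2, s3]

/-- The polyconvex integrand. -/
def Ppoly : Mat2 × ℝ → EReal := fun X =>
  if 0 < X.2 then (((Nfun X.1) ^ 2 / (4 * X.2) : ℝ) : EReal) else ⊤

lemma Ppoly_ne_bot (X : Mat2 × ℝ) : Ppoly X ≠ ⊥ := by
  unfold Ppoly
  split
  · exact EReal.coe_ne_bot _
  · simp

end AuxProof

lemma coe_nonneg_mul_ne_bot (r : ℝ) (hr : 0 ≤ r) (x : EReal) (hx : x ≠ ⊥) :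
    (r : EReal) * x ≠ ⊥ := by
  rcases eq_or_lt_of_le hr with h | h
  · rw [← h]; simp
  · induction x with
    | bot => exact absurd rfl hx
    | coe y => rw [← EReal.coe_mul]; exact EReal.coe_ne_bot _
    | top => rw [EReal.coe_mul_top_of_pos h]; simp

lemma Ppoly_convex (X Y : Mat2 × ℝ) (t : ℝ) (ht : 0 ≤ t) (ht1 : t ≤ 1) :
    Ppoly (t • X + (1 - t) • Y) ≤ (t : ℝ) * Ppoly X + ((1 - t : ℝ) : EReal) * Ppoly Y := by
  by_cases hX : 0 < X.2
  · by_cases hY : 0 < Y.2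
    · -- both determinants positive
      have h2 : (t • X + (1 - t) • Y).2 = t * X.2 + (1 - t) * Y.2 := rfl
      have hfst : (t • X + (1 - t) • Y).1 = t • X.1 + (1 - t) • Y.1 := rfl
      have hD : 0 < t * X.2 + (1 - t) * Y.2 := by
        rcases lt_or_eq_of_le ht with h | h
        · nlinarith [mul_pos h hX, mul_nonneg (by linarith : (0:ℝ) ≤ 1 - t) hY.le]
        · rw [← h]; simpa using hY
      have hZ : 0 < (t • X + (1 - t) • Y).2 := by rw [h2]; exact hD
      unfold Ppoly
      rw [if_pos hX, if_pos hY, if_pos hZ, ← EReal.coe_mul, ← EReal.coe_mul,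
        ← EReal.coe_add, EReal.coe_le_coe_iff]
      have hN := Nfun_convex X.1 Y.1 t (1 - t) ht (by linarith)
      have hNc : 0 ≤ t * Nfun X.1 + (1 - t) * Nfun Y.1 := by
        have := Nfun_nonneg X.1; have := Nfun_nonneg Y.1; nlinarith
      calc Nfun ((t • X + (1 - t) • Y).1) ^ 2 / (4 * (t • X + (1 - t) • Y).2)
          ≤ (t * Nfun X.1 + (1 - t) * Nfun Y.1) ^ 2 / (4 * (t * X.2 + (1 - t) * Y.2)) := by
            rw [h2, hfst]
            apply div_le_div_of_nonneg_right ?_ ?_ |>.trans_eq rfl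
            · exact pow_le_pow_left₀ (Nfun_nonneg _) hN 2
            · positivity
        _ ≤ t * (Nfun X.1 ^ 2 / (4 * X.2)) + (1 - t) * (Nfun Y.1 ^ 2 / (4 * Y.2)) :=
            perspective_ineq _ _ _ _ _ _ hX hY ht (by linarith) (by ring)
    · -- Y.2 ≤ 0 : Ppoly Y = ⊤
      have hPY : Ppoly Y = ⊤ := by unfold Ppoly; rw [if_neg hY]
      rcases eq_or_lt_of_le ht1 with h | h
      · -- t = 1
        rw [h]
        simp only [sub_self, zero_smul, add_zero, one_smul, EReal.coe_zero, zero_mul,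
          EReal.coe_one, one_mul]
        exact le_refl _
      · -- t < 1
        have h1t : (0:ℝ) < 1 - t := by linarith
        rw [hPY, EReal.coe_mul_top_of_pos h1t,
          EReal.add_top_of_ne_bot (coe_nonneg_mul_ne_bot t ht _ (Ppoly_ne_bot X))]
        exact le_top
  · -- X.2 ≤ 0 : Ppoly X = ⊤
    have hPX : Ppoly X = ⊤ := by unfold Ppoly; rw [if_neg hX]
    rcases eq_or_lt_of_le ht with h | h
    · -- t = 0
      rw [← h]
      simp only [zero_smul, zero_add, sub_zero, one_smul, EReal.coe_zero, zero_mul,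
        EReal.coe_one, one_mul]
      exact le_refl _
    · -- t > 0
      rw [hPX, EReal.coe_mul_top_of_pos h,
        EReal.top_add_of_ne_bot (coe_nonneg_mul_ne_bot (1 - t) (by linarith) _ (Ppoly_ne_bot Y))]
      exact le_top

lemma Ppoly_eq (F : Mat2) (hF : 0 < F.det) :
    ((sv1 F / sv2 F : ℝ) : EReal) = Ppoly (F, F.det) := by
  unfold Ppoly
  rw [if_pos (show 0 < (F, F.det).2 from hF)]
  rw [EReal.coe_eq_coe_iff]
  show sv1 F / sv2 F = Nfun F ^ 2 / (4 * F.det)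
  rw [sv_ratio F hF, Nfun_sq F hF]
  have hD : F.det ≠ 0 := hF.ne'
  field_simp
  ring

/-- The linear distortion `W(F) = K(F) = λ₁/λ₂` is polyconvex, equals
`Ψ(𝕂(F))` with `Ψ(x) = x + √(x² − 1)`, and `Ψ` is not convex on `[1,∞)`: a polyconvex
conformally invariant energy whose representation in terms of the distortion `𝕂` is not
convex. -/
theorem linear_distortion_polyconvex_but_Psi_not_convex :
    Polyconvex (fun F : Mat2 => sv1 F / sv2 F) ∧
      (∀ F : Mat2, 0 < F.det →
        sv1 F / sv2 F = Kdist F + Real.sqrt ((Kdist F) ^ 2 - 1)) ∧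
      ¬ ConvexOn ℝ (Set.Ici (1 : ℝ)) (fun x : ℝ => x + Real.sqrt (x ^ 2 - 1)) := by
  refine ⟨⟨Ppoly, fun X Y t ht ht1 => Ppoly_convex X Y t ht ht1, fun F hF => Ppoly_eq F hF⟩,
    ?_, ?_⟩
  · -- part (b)
    intro F hF
    rw [sv_ratio F hF]
    have hdisc : (0:ℝ) ≤ frobSq F ^ 2 - 4 * F.det ^ 2 := by
      nlinarith [frobSq_ge F, frobSq_ge' F]
    have hD : (0:ℝ) < 2 * F.det := by linarith
    have hKd : Kdist F = frobSq F / (2 * F.det) := rfl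
    have h1 : Kdist F ^ 2 - 1 = (frobSq F ^ 2 - 4 * F.det ^ 2) / (2 * F.det) ^ 2 := by
      rw [hKd]; field_simp; ring
    rw [h1, hKd, Real.sqrt_div hdisc, Real.sqrt_sq hD.le, add_div]
  · -- part (c)
    intro hc
    have h1 : (1:ℝ) ∈ Set.Ici (1:ℝ) := Set.mem_Ici.2 le_rfl
    have h2 : (2:ℝ) ∈ Set.Ici (1:ℝ) := by norm_num
    have key := hc.2 h1 h2 (by norm_num : (0:ℝ) ≤ 1/2) (by norm_num : (0:ℝ) ≤ 1/2)
      (by norm_num : (1:ℝ)/2 + 1/2 = 1)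
    simp only [smul_eq_mul] at key
    have e : (1:ℝ)/2 * 1 + 1/2 * 2 = 3/2 := by norm_num
    rw [e] at key
    have e1 : Real.sqrt ((1:ℝ) ^ 2 - 1) = 0 := by norm_num
    rw [e1] at key
    have hA : Real.sqrt ((3/2 : ℝ) ^ 2 - 1) ^ 2 = (3/2 : ℝ) ^ 2 - 1 :=
      Real.sq_sqrt (by norm_num)
    have hB : Real.sqrt ((2:ℝ) ^ 2 - 1) ^ 2 = (2:ℝ) ^ 2 - 1 := Real.sq_sqrt (by norm_num)
    have hA0 : 0 ≤ Real.sqrt ((3/2 : ℝ) ^ 2 - 1) := Real.sqrt_nonneg _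
    have hB0 : 0 ≤ Real.sqrt ((2:ℝ) ^ 2 - 1) := Real.sqrt_nonneg _
    have hAB : Real.sqrt ((3/2 : ℝ) ^ 2 - 1) ≤ Real.sqrt ((2:ℝ) ^ 2 - 1) / 2 := by
      linarith [key]
    have hsq : Real.sqrt ((3/2 : ℝ) ^ 2 - 1) * Real.sqrt ((3/2 : ℝ) ^ 2 - 1)
        ≤ (Real.sqrt ((2:ℝ) ^ 2 - 1) / 2) * (Real.sqrt ((2:ℝ) ^ 2 - 1) / 2) :=
      mul_self_le_mul_self hA0 hAB
    have e5 : ((3/2 : ℝ) ^ 2 - 1) = 5/4 := by norm_num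
    have e3 : ((2 : ℝ) ^ 2 - 1) = 3 := by norm_num
    rw [e5] at hA hsq
    rw [e3] at hB hsq
    nlinarith [hA, hB, hsq]
end
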